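/- Suppose M = 0 and q > 0. If u ∈ 𝔸_0 is a ground state (ℰ_q[u] ≤ ℰ_q[v] for all v ∈ 𝔸_0), then u₁ and u₋₁ are both identically zero on ℝ³. -/

import Mathlib

open MeasureTheory
open scoped RealInnerProductSpace

noncomputable section

abbrev E3 := EuclideanSpace ℝ (Fin 3)

/-- Pointwise squared norm `|u|² = u₁² + u₀² + u₋₁²` of a triple of functions. -/
def nsq (u1 u0 um1 : E3 → ℝ) (x : E3) : ℝ := u1 x ^ 2 + u0 x ^ 2 + um1 x ^ 2

/-- The energy functional `ℰ_q[u]`. -/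
def energy (V : E3 → ℝ) (βn βs q : ℝ) (u1 u0 um1 : E3 → ℝ) : ℝ :=
  ∫ x : E3,
    (‖gradient u1 x‖ ^ 2 + ‖gradient u0 x‖ ^ 2 + ‖gradient um1 x‖ ^ 2
      + V x * nsq u1 u0 um1 x
      + βn * (nsq u1 u0 um1 x) ^ 2
      + βs * (2 * u0 x ^ 2 * (u1 x - um1 x) ^ 2 + (u1 x ^ 2 - um1 x ^ 2) ^ 2)
      + q * (u1 x ^ 2 + um1 x ^ 2))

/-- The admissible class `𝔸_M`: triples of nonnegative `C¹` functions with the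
required integrability and the constraints `𝒩[u] = 1`, `ℳ[u] = M`. -/
structure Admissible (V : E3 → ℝ) (M : ℝ) (u1 u0 um1 : E3 → ℝ) : Prop where
  smooth1 : ContDiff ℝ 1 u1
  smooth0 : ContDiff ℝ 1 u0
  smoothm1 : ContDiff ℝ 1 um1
  nonneg1 : ∀ x, 0 ≤ u1 x
  nonneg0 : ∀ x, 0 ≤ u0 x
  nonnegm1 : ∀ x, 0 ≤ um1 x
  l2_1 : Integrable (fun x => u1 x ^ 2)
  l2_0 : Integrable (fun x => u0 x ^ 2)
  l2_m1 : Integrable (fun x => um1 x ^ 2)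
  grad2_1 : Integrable (fun x => ‖gradient u1 x‖ ^ 2)
  grad2_0 : Integrable (fun x => ‖gradient u0 x‖ ^ 2)
  grad2_m1 : Integrable (fun x => ‖gradient um1 x‖ ^ 2)
  l4_1 : Integrable (fun x => u1 x ^ 4)
  l4_0 : Integrable (fun x => u0 x ^ 4)
  l4_m1 : Integrable (fun x => um1 x ^ 4)
  pot : Integrable (fun x => V x * nsq u1 u0 um1 x)
  mass : ∫ x : E3, nsq u1 u0 um1 x = 1
  magnetization : ∫ x : E3, (u1 x ^ 2 - um1 x ^ 2) = M

/-- Hypotheses on the trap potential `V`: measurable, nonnegative, locally bounded,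
and tending to infinity at infinity. -/
structure TrapPotential (V : E3 → ℝ) : Prop where
  meas : Measurable V
  nonneg : ∀ x, 0 ≤ V x
  bddOnBalls : ∀ r : ℝ, ∃ C : ℝ, ∀ x : E3, ‖x‖ ≤ r → V x ≤ C
  tendsToInfty : ∀ C : ℝ, 0 < C → ∃ R : ℝ, 0 < R ∧ ∀ x : E3, R ≤ ‖x‖ → C ≤ V x

/-- `u` is a ground state: admissible and minimizes the energy over `𝔸_M`. -/
def IsGroundState (V : E3 → ℝ) (βn βs q M : ℝ) (u1 u0 um1 : E3 → ℝ) : Prop :=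
  Admissible V M u1 u0 um1 ∧
    ∀ v1 v0 vm1 : E3 → ℝ, Admissible V M v1 v0 vm1 →
      energy V βn βs q u1 u0 um1 ≤ energy V βn βs q v1 v0 vm1

set_option maxHeartbeats 1000000

open Filter Topology Asymptotics

lemma norm_grad_eq (f : E3 → ℝ) (x : E3) : ‖gradient f x‖ = ‖fderiv ℝ f x‖ :=
  (InnerProductSpace.toDual ℝ E3).symm.norm_map _

lemma cauchy3 {a b c : ℝ} (f g h : E3 →L[ℝ] ℝ) (ha : 0 ≤ a) (hb : 0 ≤ b) (hc : 0 ≤ c) :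
    ‖a • f + b • g + c • h‖ ≤
      Real.sqrt (a ^ 2 + b ^ 2 + c ^ 2) * Real.sqrt (‖f‖ ^ 2 + ‖g‖ ^ 2 + ‖h‖ ^ 2) := by
  have h1 : ‖a • f + b • g + c • h‖ ≤ a * ‖f‖ + b * ‖g‖ + c * ‖h‖ := by
    calc ‖a • f + b • g + c • h‖ ≤ ‖a • f + b • g‖ + ‖c • h‖ := norm_add_le _ _
      _ ≤ ‖a • f‖ + ‖b • g‖ + ‖c • h‖ := by
          gcongr; exact norm_add_le _ _
      _ = a * ‖f‖ + b * ‖g‖ + c * ‖h‖ := by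
          rw [norm_smul a f, norm_smul b g, norm_smul c h]
          simp [abs_of_nonneg, ha, hb, hc]
  refine h1.trans ?_
  rw [← Real.sqrt_mul (by positivity)]
  rw [Real.le_sqrt (by positivity) (by positivity)]
  nlinarith [sq_nonneg (a * ‖g‖ - b * ‖f‖), sq_nonneg (a * ‖h‖ - c * ‖f‖),
    sq_nonneg (b * ‖h‖ - c * ‖g‖), norm_nonneg f, norm_nonneg g, norm_nonneg h,
    mul_nonneg ha hb, mul_nonneg hb hc, mul_nonneg ha hc]

lemma sqrt_nsq_good (u1 u0 um1 : E3 → ℝ)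
    (h1 : ContDiff ℝ 1 u1) (h0 : ContDiff ℝ 1 u0) (hm : ContDiff ℝ 1 um1)
    (n1 : ∀ x, 0 ≤ u1 x) (n0 : ∀ x, 0 ≤ u0 x) (nm : ∀ x, 0 ≤ um1 x) :
    ContDiff ℝ 1 (fun x => Real.sqrt (nsq u1 u0 um1 x)) ∧
      ∀ x, ‖gradient (fun x => Real.sqrt (nsq u1 u0 um1 x)) x‖ ^ 2 ≤
        ‖gradient u1 x‖ ^ 2 + ‖gradient u0 x‖ ^ 2 + ‖gradient um1 x‖ ^ 2 := by
  classical
  set g : E3 → ℝ := nsq u1 u0 um1 with hg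
  have gdef : ∀ x, g x = u1 x ^ 2 + u0 x ^ 2 + um1 x ^ 2 := fun x => rfl
  have gnn : ∀ x, 0 ≤ g x := fun x => by rw [gdef]; positivity
  set w : E3 → ℝ := fun x => Real.sqrt (g x) with hw
  set gsum : E3 → (E3 →L[ℝ] ℝ) := fun x =>
    u1 x • fderiv ℝ u1 x + u0 x • fderiv ℝ u0 x + um1 x • fderiv ℝ um1 x with hgsum
  set w' : E3 → (E3 →L[ℝ] ℝ) := fun x =>
    if g x = 0 then 0 else (Real.sqrt (g x))⁻¹ • gsum x with hw'
  have d1 : Differentiable ℝ u1 := h1.differentiable one_ne_zero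
  have d0 : Differentiable ℝ u0 := h0.differentiable one_ne_zero
  have dm : Differentiable ℝ um1 := hm.differentiable one_ne_zero
  -- at zeros of g, values and fderivs vanish
  have hzero : ∀ x, g x = 0 →
      u1 x = 0 ∧ u0 x = 0 ∧ um1 x = 0 ∧
      fderiv ℝ u1 x = 0 ∧ fderiv ℝ u0 x = 0 ∧ fderiv ℝ um1 x = 0 := by
    intro x hx
    have hx' : u1 x ^ 2 + u0 x ^ 2 + um1 x ^ 2 = 0 := (gdef x) ▸ hx
    have e1 : u1 x = 0 := by nlinarith [sq_nonneg (u1 x), sq_nonneg (u0 x), sq_nonneg (um1 x)]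
    have e0 : u0 x = 0 := by nlinarith [sq_nonneg (u1 x), sq_nonneg (u0 x), sq_nonneg (um1 x)]
    have em : um1 x = 0 := by nlinarith [sq_nonneg (u1 x), sq_nonneg (u0 x), sq_nonneg (um1 x)]
    have lm1 : IsLocalMin u1 x := Eventually.of_forall fun y => by rw [e1]; exact n1 y
    have lm0 : IsLocalMin u0 x := Eventually.of_forall fun y => by rw [e0]; exact n0 y
    have lmm : IsLocalMin um1 x := Eventually.of_forall fun y => by rw [em]; exact nm y
    exact ⟨e1, e0, em, lm1.fderiv_eq_zero, lm0.fderiv_eq_zero, lmm.fderiv_eq_zero⟩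
  -- auxiliary: w' values
  have w'eq0 : ∀ x, g x = 0 → w' x = 0 := by
    intro x hx; simp only [hw']; rw [if_pos hx]
  have w'eqpos : ∀ x, g x ≠ 0 → w' x = (Real.sqrt (g x))⁻¹ • gsum x := by
    intro x hx; simp only [hw']; rw [if_neg hx]
  -- derivative of squares
  have sqder : ∀ (f : E3 → ℝ), Differentiable ℝ f → ∀ x : E3,
      HasFDerivAt (fun y => f y ^ 2) ((2 * f x) • fderiv ℝ f x) x := by
    intro f df x
    have h := ((df x).hasFDerivAt).mul ((df x).hasFDerivAt)
    have he : (fun y => f y * f y) = fun y => f y ^ 2 := by funext y; ring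
    rw [show f * f = fun y => f y ^ 2 from he] at h
    refine h.congr_fderiv ?_
    ext v
    simp only [ContinuousLinearMap.smul_apply, ContinuousLinearMap.add_apply, smul_eq_mul]
    ring
  -- derivative of g
  have hgder : ∀ x, HasFDerivAt g
      ((2 * u1 x) • fderiv ℝ u1 x + (2 * u0 x) • fderiv ℝ u0 x
        + (2 * um1 x) • fderiv ℝ um1 x) x := by
    intro x
    have hg' : g = fun y => u1 y ^ 2 + u0 y ^ 2 + um1 y ^ 2 := funext gdef
    rw [hg']
    exact ((sqder u1 d1 x).add (sqder u0 d0 x)).add (sqder um1 dm x)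
  have hder : ∀ x, HasFDerivAt w (w' x) x := by
    intro x
    by_cases hx : g x = 0
    · rw [w'eq0 x hx]
      obtain ⟨e1, e0, em, f1, f0, fm⟩ := hzero x hx
      have o1 : (fun y => u1 y) =o[𝓝 x] fun y => y - x := by
        have := ((d1 x).hasFDerivAt).isLittleO
        simpa [e1, f1] using this
      have o0 : (fun y => u0 y) =o[𝓝 x] fun y => y - x := by
        have := ((d0 x).hasFDerivAt).isLittleO
        simpa [e0, f0] using this
      have om : (fun y => um1 y) =o[𝓝 x] fun y => y - x := by
        have := ((dm x).hasFDerivAt).isLittleO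
        simpa [em, fm] using this
      have osum : (fun y => u1 y + u0 y + um1 y) =o[𝓝 x] fun y => y - x := (o1.add o0).add om
      have hbig : (fun y => w y) =O[𝓝 x] fun y => u1 y + u0 y + um1 y := by
        apply isBigO_of_le
        intro y
        have hb : Real.sqrt (g y) ≤ u1 y + u0 y + um1 y := by
          rw [show u1 y + u0 y + um1 y =
            Real.sqrt ((u1 y + u0 y + um1 y) ^ 2) from
            (Real.sqrt_sq (add_nonneg (add_nonneg (n1 y) (n0 y)) (nm y))).symm]
          apply Real.sqrt_le_sqrt
          rw [gdef]
          nlinarith [mul_nonneg (n1 y) (n0 y), mul_nonneg (n0 y) (nm y),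
            mul_nonneg (n1 y) (nm y)]
        rw [Real.norm_eq_abs, Real.norm_eq_abs, abs_of_nonneg (Real.sqrt_nonneg _),
          abs_of_nonneg (add_nonneg (add_nonneg (n1 y) (n0 y)) (nm y))]
        exact hb
      have hlo : (fun y => w y) =o[𝓝 x] fun y => y - x := hbig.trans_isLittleO osum
      have hwx : w x = 0 := by rw [hw]; simp [hx]
      exact hasFDerivAt_iff_isLittleO.mpr (by simpa [hwx] using hlo)
    · rw [w'eqpos x hx]
      have hgx : 0 < g x := lt_of_le_of_ne (gnn x) (Ne.symm hx)
      have hs : 0 < Real.sqrt (g x) := Real.sqrt_pos.mpr hgx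
      have hcomp := (Real.hasDerivAt_sqrt hx).comp_hasFDerivAt x (hgder x)
      refine hcomp.congr_fderiv ?_
      ext v
      simp only [hgsum, ContinuousLinearMap.smul_apply, ContinuousLinearMap.add_apply,
        smul_eq_mul]
      field_simp
  have hfd : fderiv ℝ w = w' := funext fun x => (hder x).fderiv
  -- continuity facts
  have cg : Continuous g := by
    rw [funext gdef]
    exact ((h1.continuous.pow 2).add (h0.continuous.pow 2)).add (hm.continuous.pow 2)
  have cf1 : Continuous (fderiv ℝ u1) := h1.continuous_fderiv one_ne_zero
  have cf0 : Continuous (fderiv ℝ u0) := h0.continuous_fderiv one_ne_zero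
  have cfm : Continuous (fderiv ℝ um1) := hm.continuous_fderiv one_ne_zero
  have cgsum : Continuous gsum := 
    ((h1.continuous.smul cf1).add (h0.continuous.smul cf0)).add (hm.continuous.smul cfm)
  -- the uniform bound ‖w' y‖ ≤ bound y
  set bound : E3 → ℝ := fun y =>
    Real.sqrt (‖fderiv ℝ u1 y‖ ^ 2 + ‖fderiv ℝ u0 y‖ ^ 2 + ‖fderiv ℝ um1 y‖ ^ 2) with hbound
  have hwb : ∀ y, ‖w' y‖ ≤ bound y := by
    intro y
    by_cases hy : g y = 0
    · rw [w'eq0 y hy, norm_zero]; exact Real.sqrt_nonneg _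
    · have hgy : 0 < g y := lt_of_le_of_ne (gnn y) (Ne.symm hy)
      have hs : 0 < Real.sqrt (g y) := Real.sqrt_pos.mpr hgy
      rw [w'eqpos y hy]
      rw [norm_smul ((Real.sqrt (g y))⁻¹) (gsum y), Real.norm_eq_abs, abs_of_nonneg (inv_nonneg.mpr hs.le)]
      have hc := cauchy3 (fderiv ℝ u1 y) (fderiv ℝ u0 y) (fderiv ℝ um1 y)
        (n1 y) (n0 y) (nm y)
      rw [← gdef y] at hc
      calc (Real.sqrt (g y))⁻¹ * ‖gsum y‖
          ≤ (Real.sqrt (g y))⁻¹ * (Real.sqrt (g y) * bound y) := by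
            apply mul_le_mul_of_nonneg_left _ (inv_nonneg.mpr hs.le)
            exact hc
        _ = bound y := by field_simp
  have cbound : Continuous bound := by
    apply Real.continuous_sqrt.comp
    fun_prop
  have hcw' : Continuous w' := by
    rw [continuous_iff_continuousAt]
    intro x
    by_cases hx : g x = 0
    · have hw'x : w' x = 0 := by rw [hw']; simp [hx]
      rw [ContinuousAt, hw'x]
      apply squeeze_zero_norm hwb
      have hbx : bound x = 0 := by
        obtain ⟨-, -, -, f1, f0, fm⟩ := hzero x hx
        rw [hbound]; simp [f1, f0, fm]
      have := cbound.continuousAt (x := x)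
      rwa [ContinuousAt, hbx] at this
    · have hev : ∀ᶠ y in 𝓝 x, g y ≠ 0 := (cg.continuousAt).eventually_ne hx
      have hca : ContinuousAt (fun y => (Real.sqrt (g y))⁻¹ • gsum y) x := by
        apply ContinuousAt.fun_smul
        · exact ((Real.continuous_sqrt.comp cg).continuousAt).inv₀
            (Real.sqrt_pos.mpr (lt_of_le_of_ne (gnn x) (Ne.symm hx))).ne'
        · exact cgsum.continuousAt
      apply hca.congr
      filter_upwards [hev] with y hy
      rw [w'eqpos y hy]
  constructor
  · exact contDiff_one_iff_fderiv.mpr ⟨fun x => (hder x).differentiableAt, hfd ▸ hcw'⟩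
  · intro x
    have key : ‖fderiv ℝ w x‖ ≤ bound x := hfd ▸ hwb x
    have : ‖gradient w x‖ ≤ bound x := by rw [norm_grad_eq]; exact key
    have hb2 : bound x ^ 2 = ‖fderiv ℝ u1 x‖ ^ 2 + ‖fderiv ℝ u0 x‖ ^ 2 + ‖fderiv ℝ um1 x‖ ^ 2 :=
      Real.sq_sqrt (by positivity)
    calc ‖gradient w x‖ ^ 2 ≤ bound x ^ 2 := by
          apply pow_le_pow_left₀ (norm_nonneg _) this
      _ = _ := by
          rw [hb2, norm_grad_eq u1, norm_grad_eq u0, norm_grad_eq um1]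

/-- for `M = 0` and `q > 0`, the outer components of a ground state vanish. -/
theorem ground_state_M_zero_q_pos (V : E3 → ℝ) (βn βs q : ℝ)
    (hV : TrapPotential V) (hβn : 0 < βn) (hβs : 0 < βs) (hq : 0 < q)
    (u1 u0 um1 : E3 → ℝ)
    (hu : IsGroundState V βn βs q 0 u1 u0 um1) :
    (∀ x, u1 x = 0) ∧ (∀ x, um1 x = 0) := by
  classical
  obtain ⟨hA, hmin⟩ := hu
  have c1 : Continuous u1 := hA.smooth1.continuous
  have c0 : Continuous u0 := hA.smooth0.continuous
  have cm : Continuous um1 := hA.smoothm1.continuous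
  set g : E3 → ℝ := nsq u1 u0 um1 with hg
  have gdef : ∀ x, g x = u1 x ^ 2 + u0 x ^ 2 + um1 x ^ 2 := fun _ => rfl
  have gnn : ∀ x, 0 ≤ g x := fun x => by rw [gdef]; positivity
  set w : E3 → ℝ := fun x => Real.sqrt (g x) with hw
  obtain ⟨hwC1, hwgrad⟩ := sqrt_nsq_good u1 u0 um1 hA.smooth1 hA.smooth0 hA.smoothm1
    hA.nonneg1 hA.nonneg0 hA.nonnegm1
  have hwC1 : ContDiff ℝ 1 w := hwC1
  have hwgrad : ∀ x, ‖gradient w x‖ ^ 2 ≤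
      ‖gradient u1 x‖ ^ 2 + ‖gradient u0 x‖ ^ 2 + ‖gradient um1 x‖ ^ 2 := hwgrad
  have hwsq : ∀ x, w x ^ 2 = g x := fun x => Real.sq_sqrt (gnn x)
  have cg : Continuous g := by
    rw [funext gdef]; exact ((c1.pow 2).add (c0.pow 2)).add (cm.pow 2)
  -- integrability facts
  have Ig : Integrable g := (hA.l2_1.add hA.l2_0).add hA.l2_m1
  have I4 : Integrable (fun x => u1 x ^ 4 + u0 x ^ 4 + um1 x ^ 4) :=
    (hA.l4_1.add hA.l4_0).add hA.l4_m1
  have Ig2 : Integrable (fun x => g x ^ 2) := by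
    refine Integrable.mono' (I4.const_mul 3) ((cg.pow 2).aestronglyMeasurable) ?_
    filter_upwards with x
    rw [Real.norm_eq_abs, abs_of_nonneg (by positivity), gdef]
    nlinarith [sq_nonneg (u1 x ^ 2 - u0 x ^ 2), sq_nonneg (u1 x ^ 2 - um1 x ^ 2),
      sq_nonneg (u0 x ^ 2 - um1 x ^ 2)]
  have IS : Integrable
      (fun x => 2 * u0 x ^ 2 * (u1 x - um1 x) ^ 2 + (u1 x ^ 2 - um1 x ^ 2) ^ 2) := by
    refine Integrable.mono' (I4.const_mul 6) ?_ ?_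
    · apply Continuous.aestronglyMeasurable; fun_prop
    · filter_upwards with x
      rw [Real.norm_eq_abs, abs_of_nonneg (by positivity)]
      nlinarith [sq_nonneg (u0 x ^ 2 - u1 x ^ 2), sq_nonneg (u0 x ^ 2 - um1 x ^ 2),
        sq_nonneg (u1 x ^ 2 - um1 x ^ 2), sq_nonneg (u1 x + um1 x), sq_nonneg (u1 x - um1 x),
        sq_nonneg (u0 x * (u1 x - um1 x)), sq_nonneg (u1 x * um1 x)]
  have IQ : Integrable (fun x => ‖gradient u1 x‖ ^ 2 + ‖gradient u0 x‖ ^ 2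
      + ‖gradient um1 x‖ ^ 2) := (hA.grad2_1.add hA.grad2_0).add hA.grad2_m1
  have cgw : Continuous (fun x => gradient w x) := by
    have hfw : Continuous (fderiv ℝ w) := (contDiff_one_iff_fderiv.mp hwC1).2
    exact (InnerProductSpace.toDual ℝ E3).symm.continuous.comp hfw
  have Igw : Integrable (fun x => ‖gradient w x‖ ^ 2) := by
    refine Integrable.mono' IQ ((cgw.norm.pow 2).aestronglyMeasurable) ?_
    filter_upwards with x
    rw [Real.norm_eq_abs, abs_of_nonneg (by positivity)]
    exact hwgrad x
  have IP : Integrable (fun x => u1 x ^ 2 + um1 x ^ 2) := hA.l2_1.add hA.l2_m1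
  -- the competitor (0, w, 0)
  set z : E3 → ℝ := fun _ => 0 with hz
  have nsqv : ∀ x, nsq z w z x = g x := by
    intro x; show z x ^ 2 + w x ^ 2 + z x ^ 2 = g x
    simp [hz, hwsq x]
  have hAdmv : Admissible V 0 z w z := by
    refine ⟨contDiff_const, hwC1, contDiff_const, fun x => le_refl 0,
      fun x => Real.sqrt_nonneg _, fun x => le_refl 0, ?_, ?_, ?_, ?_, ?_, ?_, ?_, ?_, ?_,
      ?_, ?_, ?_⟩
    · have hz2 : (fun x : E3 => z x ^ 2) = fun _ => (0:ℝ) := by funext x; simp [hz]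
      rw [hz2]; exact integrable_zero E3 ℝ (volume : Measure E3)
    · exact Ig.congr (by filter_upwards with x; exact (hwsq x).symm)
    · have hz2 : (fun x : E3 => z x ^ 2) = fun _ => (0:ℝ) := by funext x; simp [hz]
      rw [hz2]; exact integrable_zero E3 ℝ (volume : Measure E3)
    · have : (fun x : E3 => ‖gradient z x‖ ^ 2) = fun _ => 0 := by
        funext x; rw [hz, gradient_fun_const]; simp
      rw [this]; exact integrable_zero E3 ℝ (volume : Measure E3)
    · exact Igw
    · have : (fun x : E3 => ‖gradient z x‖ ^ 2) = fun _ => 0 := by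
        funext x; rw [hz, gradient_fun_const]; simp
      rw [this]; exact integrable_zero E3 ℝ (volume : Measure E3)
    · have hz4 : (fun x : E3 => z x ^ 4) = fun _ => (0:ℝ) := by funext x; simp [hz]
      rw [hz4]; exact integrable_zero E3 ℝ (volume : Measure E3)
    · exact Ig2.congr (Filter.Eventually.of_forall fun x => by
        show g x ^ 2 = w x ^ 4
        rw [show w x ^ 4 = (w x ^ 2) ^ 2 from by ring, hwsq x])
    · have hz4 : (fun x : E3 => z x ^ 4) = fun _ => (0:ℝ) := by funext x; simp [hz]
      rw [hz4]; exact integrable_zero E3 ℝ (volume : Measure E3)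
    · exact hA.pot.congr (Filter.Eventually.of_forall fun x =>
        (congrArg (fun t => V x * t) (nsqv x)).symm)
    · rw [show (fun x => nsq z w z x) = g from funext nsqv]
      exact (hg ▸ hA.mass : ∫ x : E3, g x = 1)
    · simp [hz]
  have hle : energy V βn βs q u1 u0 um1 ≤ energy V βn βs q z w z := hmin z w z hAdmv
  -- rewrite both energies
  set A : E3 → ℝ := fun x =>
    ‖gradient u1 x‖ ^ 2 + ‖gradient u0 x‖ ^ 2 + ‖gradient um1 x‖ ^ 2
      + V x * g x + βn * g x ^ 2
      + βs * (2 * u0 x ^ 2 * (u1 x - um1 x) ^ 2 + (u1 x ^ 2 - um1 x ^ 2) ^ 2)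
      + q * (u1 x ^ 2 + um1 x ^ 2) with hAdef
  set B : E3 → ℝ := fun x => ‖gradient w x‖ ^ 2 + V x * g x + βn * g x ^ 2 with hBdef
  have eu : energy V βn βs q u1 u0 um1 = ∫ x : E3, A x := rfl
  have ev : energy V βn βs q z w z = ∫ x : E3, B x := by
    unfold energy
    congr 1
    funext x
    rw [hBdef]
    simp only [nsqv x]
    simp only [hz, gradient_fun_const]
    norm_num
  have IA : Integrable A := by
    rw [hAdef]
    exact ((((IQ.add hA.pot).add (Ig2.const_mul βn)).add (IS.const_mul βs)).add
      (IP.const_mul q))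
  have IB : Integrable B := by
    rw [hBdef]
    exact (Igw.add hA.pot).add (Ig2.const_mul βn)
  have key : ∫ x : E3, q * (u1 x ^ 2 + um1 x ^ 2) ≤ ∫ x : E3, (A x - B x) := by
    refine integral_mono (IP.const_mul q) (IA.sub IB) ?_
    intro x
    have h1 := hwgrad x
    have h2 : 0 ≤ 2 * u0 x ^ 2 * (u1 x - um1 x) ^ 2 + (u1 x ^ 2 - um1 x ^ 2) ^ 2 := by positivity
    have h3 : 0 ≤ βs * (2 * u0 x ^ 2 * (u1 x - um1 x) ^ 2 + (u1 x ^ 2 - um1 x ^ 2) ^ 2) :=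
      mul_nonneg hβs.le h2
    simp only [hAdef, hBdef]
    nlinarith
  rw [integral_sub IA IB] at key
  rw [← eu, ← ev] at key
  have key2 : q * ∫ x : E3, (u1 x ^ 2 + um1 x ^ 2) ≤ 0 := by
    rw [← integral_const_mul]
    linarith
  have hPnn : 0 ≤ ∫ x : E3, (u1 x ^ 2 + um1 x ^ 2) :=
    integral_nonneg fun x => by positivity
  have hP0 : ∫ x : E3, (u1 x ^ 2 + um1 x ^ 2) = 0 := by
    nlinarith
  rw [integral_add hA.l2_1 hA.l2_m1] at hP0
  have h1nn : 0 ≤ ∫ x : E3, u1 x ^ 2 := integral_nonneg fun x => sq_nonneg _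
  have hmnn : 0 ≤ ∫ x : E3, um1 x ^ 2 := integral_nonneg fun x => sq_nonneg _
  have h10 : ∫ x : E3, u1 x ^ 2 = 0 := by linarith
  have hm0 : ∫ x : E3, um1 x ^ 2 = 0 := by linarith
  have hae1 : (fun x => u1 x ^ 2) =ᵐ[volume] (fun _ => (0:ℝ)) :=
    (integral_eq_zero_iff_of_nonneg (fun x => sq_nonneg _) hA.l2_1).mp h10
  have haem : (fun x => um1 x ^ 2) =ᵐ[volume] (fun _ => (0:ℝ)) :=
    (integral_eq_zero_iff_of_nonneg (fun x => sq_nonneg _) hA.l2_m1).mp hm0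
  have he1 : (fun x => u1 x ^ 2) = (fun _ => (0:ℝ)) :=
    ((c1.pow 2).ae_eq_iff_eq volume continuous_const).mp hae1
  have hem : (fun x => um1 x ^ 2) = (fun _ => (0:ℝ)) :=
    ((cm.pow 2).ae_eq_iff_eq volume continuous_const).mp haem
  constructor
  · intro x
    have := congrFun he1 x
    exact pow_eq_zero_iff two_ne_zero |>.mp this
  · intro x
    have := congrFun hem x
    exact pow_eq_zero_iff two_ne_zero |>.mp this
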